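/- Let n be a positive integer and let X, Y, Z, A, B, C be finite types. Consider a mixed-state commutator bilocal quantum model in M_n(ℂ): positive semidefinite ρ, σ ∈ M_n(ℂ) with ρσ = σρ and, setting τ := ρσ, Tr(τ) = 1; PVMs (A_{a|x})_{a∈A}, (B_{b|y})_{b∈B}, (C_{c|z})_{c∈C} in M_n(ℂ) such that every A_{a|x} commutes with every B_{b|y} and every C_{c|z}, every B_{b|y} commutes with every C_{c|z}, and A_{a|x}σ = σA_{a|x}, ρC_{c|z} = C_{c|z}ρ for all indices. Assume the factorisation constraints: for every finite list L of pairs (a,x) ∈ A × X and every finite list M of pairs (c,z) ∈ C × Z, Tr(τ · ∏_{(a,x)∈L} A_{a|x} · ∏_{(c,z)∈M} C_{c|z}) = Tr(τ · ∏_{(a,x)∈L} A_{a|x}) · Tr(τ · ∏_{(c,z)∈M} C_{c|z}). Then τ is c-purifiable: there exist a positive integer m, Hermitian idempotents ρ', σ' ∈ M_m(ℂ) with ρ'σ' = σ'ρ' and, setting τ' := ρ'σ', Tr(τ') = 1, and PVMs (A'_{a|x}), (B'_{b|y}), (C'_{c|z}) in M_m(ℂ) satisfying the same pairwise commutation conditions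 across parties and A'_{a|x}σ' = σ'A'_{a|x}, ρ'C'_{c|z} = C'_{c|z}ρ' for all indices, such that Tr(τ' · A'_{a|x} · B'_{b|y} · C'_{c|z}) = Tr(τ · A_{a|x} · B_{b|y} · C_{c|z}) for all a, b, c, x, y, z. -/

import Mathlib

open Matrix
open scoped ComplexOrder

/-- Square root of a positive semidefinite matrix (as in the older Mathlib). -/
noncomputable def Matrix.PosSemidef.sqrt {n : ℕ} {A : Matrix (Fin n) (Fin n) ℂ} (hA : A.PosSemidef) :
    Matrix (Fin n) (Fin n) ℂ :=
  (hA.1.eigenvectorUnitary : Matrix (Fin n) (Fin n) ℂ) *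
    Matrix.diagonal ((↑) ∘ Real.sqrt ∘ hA.1.eigenvalues) *
    star (hA.1.eigenvectorUnitary : Matrix (Fin n) (Fin n) ℂ)

lemma Matrix.PosSemidef.sqrt_isHermitian {n : ℕ} {A : Matrix (Fin n) (Fin n) ℂ}
    (hA : A.PosSemidef) : hA.sqrtᴴ = hA.sqrt := by
  simp [Matrix.PosSemidef.sqrt, Matrix.conjTranspose_mul, Matrix.star_eq_conjTranspose, mul_assoc,
    Function.comp_def, Pi.star_def, Complex.star_def, Complex.conj_ofReal]

lemma Matrix.PosSemidef.sqrt_mul_self {n : ℕ} {A : Matrix (Fin n) (Fin n) ℂ}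
    (hA : A.PosSemidef) : hA.sqrt * hA.sqrt = A := by
  set U : Matrix (Fin n) (Fin n) ℂ := (hA.1.eigenvectorUnitary : Matrix (Fin n) (Fin n) ℂ)
  have hU1 : star U * U = 1 := Unitary.coe_star_mul_self hA.1.eigenvectorUnitary
  have hdd : Matrix.diagonal (((↑) : ℝ → ℂ) ∘ Real.sqrt ∘ hA.1.eigenvalues) *
      Matrix.diagonal (((↑) : ℝ → ℂ) ∘ Real.sqrt ∘ hA.1.eigenvalues) =
      Matrix.diagonal (RCLike.ofReal ∘ hA.1.eigenvalues) := by
    rw [Matrix.diagonal_mul_diagonal]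
    congr 1
    funext i
    simp [← Complex.ofReal_mul, Real.mul_self_sqrt (hA.eigenvalues_nonneg i)]
  calc hA.sqrt * hA.sqrt = U * (Matrix.diagonal (((↑) : ℝ → ℂ) ∘ Real.sqrt ∘ hA.1.eigenvalues) *
      Matrix.diagonal (((↑) : ℝ → ℂ) ∘ Real.sqrt ∘ hA.1.eigenvalues)) * star U := by
        simp only [Matrix.PosSemidef.sqrt, mul_assoc]
        rw [← mul_assoc (star U) U, hU1, one_mul]
    _ = A := by
      rw [hdd]
      conv_rhs => rw [hA.1.spectral_theorem]
      rw [Unitary.conjStarAlgAut_apply]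

namespace Stmt14Helper

open Polynomial


lemma commute_aeval {n : ℕ} {A B : Matrix (Fin n) (Fin n) ℂ} (h : Commute A B)
    (p : ℂ[X]) : Commute (aeval A p) B := by
  induction p using Polynomial.induction_on' with
  | add p q hp hq => simpa [map_add] using hp.add_left hq
  | monomial k a =>
    simp only [aeval_monomial]
    have hc : Commute ((algebraMap ℂ (Matrix (Fin n) (Fin n) ℂ)) a) B := Algebra.commutes a B
    exact hc.mul_left (h.pow_left k)

lemma sqrt_commute {n : ℕ} {A B : Matrix (Fin n) (Fin n) ℂ} (hA : A.PosSemidef)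
    (h : Commute A B) : Commute hA.sqrt B := by
  classical
  set U : Matrix (Fin n) (Fin n) ℂ := (hA.1.eigenvectorUnitary : Matrix (Fin n) (Fin n) ℂ)
  have hU1 : star U * U = 1 := Unitary.coe_star_mul_self hA.1.eigenvectorUnitary
  have hU2 : U * star U = 1 := Unitary.coe_mul_star_self hA.1.eigenvectorUnitary
  -- conjugation algebra hom
  let f : Matrix (Fin n) (Fin n) ℂ →ₐ[ℂ] Matrix (Fin n) (Fin n) ℂ :=
    { toFun := fun M => U * M * star U
      map_one' := by simp [hU2]
      map_mul' := fun M N => by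
        simp only [mul_assoc]
        rw [← mul_assoc (star U) U, hU1, one_mul]
      map_zero' := by simp
      map_add' := fun M N => by noncomm_ring
      commutes' := fun r => by
        simp [Algebra.algebraMap_eq_smul_one, Matrix.mul_smul, Matrix.smul_mul, hU2] }
  -- interpolation polynomial
  set d : Fin n → ℂ := RCLike.ofReal ∘ hA.1.eigenvalues with hd
  set s : Finset ℂ := Finset.univ.image d
  set p : ℂ[X] := Lagrange.interpolate s id (fun z => (Real.sqrt z.re : ℂ)) with hp
  have hnode : ∀ i, p.eval (d i) = (Real.sqrt (hA.1.eigenvalues i) : ℂ) := by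
    intro i
    have : d i ∈ s := Finset.mem_image_of_mem d (Finset.mem_univ i)
    have := Lagrange.eval_interpolate_at_node (fun z => (Real.sqrt z.re : ℂ))
      (Set.injOn_id _) this
    simpa [hd, hp] using this
  have hdiag : aeval (Matrix.diagonal d) p = Matrix.diagonal ((↑) ∘ Real.sqrt ∘ hA.1.eigenvalues) := by
    have h1 : aeval (Matrix.diagonal d) p
        = (Matrix.diagonalAlgHom (n := Fin n) (α := ℂ) ℂ) (aeval d p) := by
      rw [← Polynomial.aeval_algHom_apply]
      rfl
    rw [h1]
    simp only [Matrix.diagonalAlgHom_apply]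
    refine congrArg Matrix.diagonal (funext fun i => ?_)
    have h2 : (aeval d) p i = aeval (d i) p :=
      (Polynomial.aeval_algHom_apply (Pi.evalAlgHom ℂ (fun _ : Fin n => ℂ) i) d p).symm
    rw [h2, show (aeval (d i)) p = p.eval (d i) from
      congrFun (Polynomial.coe_aeval_eq_eval (d i)) p]
    simpa using hnode i
  have hAeq : A = f (Matrix.diagonal d) := by
    conv_lhs => rw [hA.1.spectral_theorem]
    rw [Unitary.conjStarAlgAut_apply]
    rfl
  have hsq : aeval A p = hA.sqrt := by
    conv_lhs => rw [hAeq]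
    rw [Polynomial.aeval_algHom_apply, hdiag]
    rfl
  rw [← hsq]
  exact commute_aeval h p


variable {n : ℕ}

/-- Vectorization of a matrix as an element of Euclidean space. -/
noncomputable def LE (n : ℕ) :
    Matrix (Fin n) (Fin n) ℂ ≃ₗ[ℂ] EuclideanSpace ℂ (Fin n × Fin n) where
  toFun x := WithLp.toLp 2 (fun p : Fin n × Fin n => x p.1 p.2)
  invFun v := Matrix.of fun i j => v (i, j)
  map_add' x y := rfl
  map_smul' c x := rfl
  left_inv x := rfl
  right_inv v := rfl

noncomputable def vecE (x : Matrix (Fin n) (Fin n) ℂ) : EuclideanSpace ℂ (Fin n × Fin n) :=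
  LE n x

lemma inner_vecE (x y : Matrix (Fin n) (Fin n) ℂ) :
    (inner ℂ (vecE x) (vecE y) : ℂ) = (xᴴ * y).trace := by
  simp only [vecE, LE, PiLp.inner_apply, RCLike.inner_apply, Matrix.trace,
    Matrix.diag, Matrix.mul_apply, Matrix.conjTranspose_apply]
  rw [Fintype.sum_prod_type]
  rw [Finset.sum_comm]
  simp [mul_comm, LinearEquiv.coe_mk, LinearMap.coe_mk, AddHom.coe_mk]
  rfl

/-- Left multiplication operator on the vectorized space. -/
noncomputable def opL (M : Matrix (Fin n) (Fin n) ℂ) :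
    EuclideanSpace ℂ (Fin n × Fin n) →ₗ[ℂ] EuclideanSpace ℂ (Fin n × Fin n) :=
  (LE n).toLinearMap ∘ₗ (LinearMap.mulLeft ℂ M) ∘ₗ (LE n).symm.toLinearMap

lemma opL_vecE (M x : Matrix (Fin n) (Fin n) ℂ) : opL M (vecE x) = vecE (M * x) := by
  simp [opL, vecE, LinearMap.mulLeft_apply]

lemma opL_mul (M N : Matrix (Fin n) (Fin n) ℂ) : opL M ∘ₗ opL N = opL (M * N) := by
  ext v : 1
  have : v = vecE ((LE n).symm v) := ((LE n).apply_symm_apply v).symm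
  rw [LinearMap.comp_apply, this, opL_vecE, opL_vecE, opL_vecE, mul_assoc]

lemma opL_one : opL (n := n) 1 = LinearMap.id := by
  ext v : 1
  have : v = vecE ((LE n).symm v) := ((LE n).apply_symm_apply v).symm
  rw [this, opL_vecE, one_mul, LinearMap.id_apply]

lemma opL_add (M N : Matrix (Fin n) (Fin n) ℂ) : opL (M + N) = opL M + opL N := by
  ext v : 1
  have : v = vecE ((LE n).symm v) := ((LE n).apply_symm_apply v).symm
  rw [this, opL_vecE, add_mul, LinearMap.add_apply, opL_vecE, opL_vecE]
  exact map_add (LE n) _ _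

lemma opL_sum {αt : Type*} (s : Finset αt) (f : αt → Matrix (Fin n) (Fin n) ℂ) :
    opL (∑ a ∈ s, f a) = ∑ a ∈ s, opL (f a) :=
  map_sum (AddMonoidHom.mk' opL opL_add) f s

lemma inner_opL (M : Matrix (Fin n) (Fin n) ℂ) (v w : EuclideanSpace ℂ (Fin n × Fin n)) :
    (inner ℂ (opL M v) w : ℂ) = inner ℂ v (opL Mᴴ w) := by
  have hv : v = vecE ((LE n).symm v) := ((LE n).apply_symm_apply v).symm
  have hw : w = vecE ((LE n).symm w) := ((LE n).apply_symm_apply w).symm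
  rw [hv, hw, opL_vecE, opL_vecE, inner_vecE, inner_vecE, Matrix.conjTranspose_mul,
    mul_assoc]

lemma adjoint_opL (M : Matrix (Fin n) (Fin n) ℂ) :
    LinearMap.adjoint (opL M) = opL Mᴴ := by
  symm
  rw [LinearMap.eq_adjoint_iff]
  intro x y
  rw [inner_opL, Matrix.conjTranspose_conjTranspose]


section Proj

local notation "E" => EuclideanSpace ℂ (Fin n × Fin n)

/-- Orthogonal projection onto a submodule, as an endomorphism. -/
noncomputable def proj (U : Submodule ℂ (EuclideanSpace ℂ (Fin n × Fin n))) :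
    EuclideanSpace ℂ (Fin n × Fin n) →ₗ[ℂ] EuclideanSpace ℂ (Fin n × Fin n) :=
  (U.subtypeL ∘L U.orthogonalProjectionOnto : E →L[ℂ] E)

variable {U : Submodule ℂ (EuclideanSpace ℂ (Fin n × Fin n))}

lemma proj_mem (x : E) : proj U x ∈ U := (U.orthogonalProjectionOnto x).2

lemma proj_eq_self {x : E} (hx : x ∈ U) : proj U x = x :=
  Submodule.starProjection_eq_self_iff.mpr hx

lemma proj_symm (x y : E) : (inner ℂ (proj U x) y : ℂ) = inner ℂ x (proj U y) :=
  U.starProjection_isSymmetric x y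

lemma proj_idem : proj U ∘ₗ proj U = proj U := by
  ext x : 1
  exact proj_eq_self (proj_mem x)

lemma adjoint_proj : LinearMap.adjoint (proj U) = proj U := by
  symm
  rw [LinearMap.eq_adjoint_iff]
  exact proj_symm

lemma proj_unique {x v : E} (hv : v ∈ U) (h0 : ∀ w ∈ U, (inner ℂ w (x - v) : ℂ) = 0) :
    proj U x = v := by
  refine Submodule.eq_starProjection_of_mem_of_inner_eq_zero hv fun w hw => ?_
  rw [← inner_conj_symm, h0 w hw, map_zero]

lemma proj_comm {T : E →ₗ[ℂ] E} (hT : ∀ x y : E, (inner ℂ (T x) y : ℂ) = inner ℂ x (T y))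
    (hinv : ∀ u ∈ U, T u ∈ U) : T ∘ₗ proj U = proj U ∘ₗ T := by
  ext x : 1
  simp only [LinearMap.comp_apply]
  symm
  refine proj_unique (hinv _ (proj_mem x)) fun w hw => ?_
  rw [← map_sub, ← hT w (x - proj U x)]
  exact (Submodule.sub_starProjection_mem_orthogonal x) (T w) (hinv w hw)

end Proj

/-- Rank one operator `x ↦ ⟪Ω, x⟫ • Ω`. -/
noncomputable def rk1 (Ω : EuclideanSpace ℂ (Fin n × Fin n)) :
    EuclideanSpace ℂ (Fin n × Fin n) →ₗ[ℂ] EuclideanSpace ℂ (Fin n × Fin n) where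
  toFun x := (inner ℂ Ω x : ℂ) • Ω
  map_add' x y := by
    show (inner ℂ Ω (x + y) : ℂ) • Ω = (inner ℂ Ω x : ℂ) • Ω + (inner ℂ Ω y : ℂ) • Ω
    rw [inner_add_right, add_smul]
  map_smul' c x := by
    show (inner ℂ Ω (c • x) : ℂ) • Ω = c • ((inner ℂ Ω x : ℂ) • Ω)
    rw [inner_smul_right, smul_smul]

lemma rk1_apply (Ω x : EuclideanSpace ℂ (Fin n × Fin n)) :
    rk1 Ω x = (inner ℂ Ω x : ℂ) • Ω := rfl

lemma trace_rk1_comp (Ω : EuclideanSpace ℂ (Fin n × Fin n))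
    (T : EuclideanSpace ℂ (Fin n × Fin n) →ₗ[ℂ] EuclideanSpace ℂ (Fin n × Fin n)) :
    LinearMap.trace ℂ _ (rk1 Ω ∘ₗ T) = (inner ℂ Ω (T Ω) : ℂ) := by
  have hfac : rk1 Ω ∘ₗ T =
      (LinearMap.toSpanSingleton ℂ _ Ω) ∘ₗ
        (((innerSL ℂ Ω).toLinearMap) ∘ₗ T) := by
    ext x : 1
    simp [rk1_apply, LinearMap.toSpanSingleton_apply, PiLp.inner_apply, Finset.sum_smul]
  rw [hfac, LinearMap.trace_comp_comm']
  have h1 : (((innerSL ℂ Ω).toLinearMap ∘ₗ T) ∘ₗ LinearMap.toSpanSingleton ℂ _ Ω)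
      = (inner ℂ Ω (T Ω) : ℂ) • LinearMap.id := by
    ext c
    simp [LinearMap.toSpanSingleton_apply]
  rw [h1, _root_.map_smul, LinearMap.trace_id, smul_eq_mul]
  simp

/-- The star algebra isomorphism to `(n*n) × (n*n)` matrices. -/
noncomputable def ThetaM (n : ℕ)
    (f : EuclideanSpace ℂ (Fin n × Fin n) →ₗ[ℂ] EuclideanSpace ℂ (Fin n × Fin n)) :
    Matrix (Fin (n * n)) (Fin (n * n)) ℂ :=
  Matrix.reindexAlgEquiv ℂ ℂ finProdFinEquiv
    (LinearMap.toMatrixOrthonormal (EuclideanSpace.basisFun (Fin n × Fin n) ℂ) f)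

lemma ThetaM_mul (f g) : ThetaM n (f ∘ₗ g) = ThetaM n f * ThetaM n g := by
  unfold ThetaM
  rw [show f ∘ₗ g = f * g from rfl, _root_.map_mul, _root_.map_mul]

lemma ThetaM_one : ThetaM n LinearMap.id = 1 := by
  unfold ThetaM
  rw [show (LinearMap.id : _) = 1 from rfl, _root_.map_one, _root_.map_one]

lemma ThetaM_sum {αt : Type*} (s : Finset αt) (f : αt → _) :
    ThetaM n (∑ a ∈ s, f a) = ∑ a ∈ s, ThetaM n (f a) := by
  unfold ThetaM
  rw [map_sum, map_sum]

lemma ThetaM_conjTranspose (f) : (ThetaM n f)ᴴ = ThetaM n (LinearMap.adjoint f) := by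
  unfold ThetaM
  rw [show LinearMap.adjoint f = star f from rfl, map_star]
  rw [Matrix.reindexAlgEquiv_apply, Matrix.reindexAlgEquiv_apply]
  rw [show ∀ (M : Matrix (Fin n × Fin n) (Fin n × Fin n) ℂ), star M = Mᴴ from fun _ => rfl]
  rw [Matrix.reindex_apply, Matrix.reindex_apply, Matrix.conjTranspose_submatrix]

lemma ThetaM_trace (f) : (ThetaM n f).trace = LinearMap.trace ℂ _ f := by
  unfold ThetaM
  rw [Matrix.reindexAlgEquiv_apply, Matrix.reindex_apply]
  have hsub : ∀ (M : Matrix (Fin n × Fin n) (Fin n × Fin n) ℂ),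
      (M.submatrix ⇑finProdFinEquiv.symm ⇑finProdFinEquiv.symm).trace = M.trace := by
    intro M
    simp only [Matrix.trace, Matrix.diag, Matrix.submatrix_apply]
    exact Equiv.sum_comp finProdFinEquiv.symm fun p => M p p
  rw [hsub]
  rw [LinearMap.trace_eq_matrix_trace ℂ (EuclideanSpace.basisFun (Fin n × Fin n) ℂ).toBasis f]
  rfl

end Stmt14Helper

open Stmt14Helper

/-- C-purifiability (finite-dimensional Corollary E.1): a mixed-state commutator bilocal
quantum model whose Alice–Charlie factorisation constraints all hold admits a pure-state
commutator bilocal model (a c-purification) reproducing the same distribution. -/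
theorem stmt14 (n : ℕ) (hn : 0 < n)
    (X Y Z A B C : Type*) [Fintype X] [Fintype Y] [Fintype Z]
    [Fintype A] [Fintype B] [Fintype C]
    (ρ σ : Matrix (Fin n) (Fin n) ℂ)
    (MA : X → A → Matrix (Fin n) (Fin n) ℂ)
    (MB : Y → B → Matrix (Fin n) (Fin n) ℂ)
    (MC : Z → C → Matrix (Fin n) (Fin n) ℂ)
    (hρ : ρ.PosSemidef) (hσ : σ.PosSemidef) (hρσ : ρ * σ = σ * ρ)
    (htr : (ρ * σ).trace = 1)
    (hApvm : ∀ x a, (MA x a)ᴴ = MA x a ∧ MA x a * MA x a = MA x a)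
    (hAsum : ∀ x, ∑ a, MA x a = 1)
    (hBpvm : ∀ y b, (MB y b)ᴴ = MB y b ∧ MB y b * MB y b = MB y b)
    (hBsum : ∀ y, ∑ b, MB y b = 1)
    (hCpvm : ∀ z c, (MC z c)ᴴ = MC z c ∧ MC z c * MC z c = MC z c)
    (hCsum : ∀ z, ∑ c, MC z c = 1)
    (hAB : ∀ x a y b, MA x a * MB y b = MB y b * MA x a)
    (hAC : ∀ x a z c, MA x a * MC z c = MC z c * MA x a)
    (hBC : ∀ y b z c, MB y b * MC z c = MC z c * MB y b)
    (hAσ : ∀ x a, MA x a * σ = σ * MA x a)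
    (hρC : ∀ z c, ρ * MC z c = MC z c * ρ)
    (hfact : ∀ (L : List (A × X)) (M : List (C × Z)),
      (ρ * σ * (L.map fun p => MA p.2 p.1).prod * (M.map fun p => MC p.2 p.1).prod).trace =
      (ρ * σ * (L.map fun p => MA p.2 p.1).prod).trace *
      (ρ * σ * (M.map fun p => MC p.2 p.1).prod).trace) :
    ∃ (m : ℕ), 0 < m ∧
      ∃ (ρ' σ' : Matrix (Fin m) (Fin m) ℂ)
        (MA' : X → A → Matrix (Fin m) (Fin m) ℂ)
        (MB' : Y → B → Matrix (Fin m) (Fin m) ℂ)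
        (MC' : Z → C → Matrix (Fin m) (Fin m) ℂ),
        ρ'ᴴ = ρ' ∧ ρ' * ρ' = ρ' ∧ σ'ᴴ = σ' ∧ σ' * σ' = σ' ∧
        ρ' * σ' = σ' * ρ' ∧ (ρ' * σ').trace = 1 ∧
        (∀ x a, (MA' x a)ᴴ = MA' x a ∧ MA' x a * MA' x a = MA' x a) ∧
        (∀ x, ∑ a, MA' x a = 1) ∧
        (∀ y b, (MB' y b)ᴴ = MB' y b ∧ MB' y b * MB' y b = MB' y b) ∧
        (∀ y, ∑ b, MB' y b = 1) ∧
        (∀ z c, (MC' z c)ᴴ = MC' z c ∧ MC' z c * MC' z c = MC' z c) ∧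
        (∀ z, ∑ c, MC' z c = 1) ∧
        (∀ x a y b, MA' x a * MB' y b = MB' y b * MA' x a) ∧
        (∀ x a z c, MA' x a * MC' z c = MC' z c * MA' x a) ∧
        (∀ y b z c, MB' y b * MC' z c = MC' z c * MB' y b) ∧
        (∀ x a, MA' x a * σ' = σ' * MA' x a) ∧
        (∀ z c, ρ' * MC' z c = MC' z c * ρ') ∧
        (∀ x y z a b c,
          (ρ' * σ' * (MA' x a * MB' y b * MC' z c)).trace =
          (ρ * σ * (MA x a * MB y b * MC z c)).trace) := by
  classical
  -- square roots and the cyclic vector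
  set r : Matrix (Fin n) (Fin n) ℂ := hρ.sqrt with hrdef
  set s : Matrix (Fin n) (Fin n) ℂ := hσ.sqrt with hsdef
  have hrH : rᴴ = r := hρ.sqrt_isHermitian
  have hsH : sᴴ = s := hσ.sqrt_isHermitian
  set w : Matrix (Fin n) (Fin n) ℂ := r * s with hwdef
  have hcomm : Commute ρ σ := hρσ
  have hrσ : r * σ = σ * r := sqrt_commute hρ hcomm
  have hww : w * wᴴ = ρ * σ := by
    have h2 : s * s = σ := hσ.sqrt_mul_self
    have h3 : r * r = ρ := hρ.sqrt_mul_self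
    calc w * wᴴ = r * s * (sᴴ * rᴴ) := by rw [hwdef, Matrix.conjTranspose_mul]
      _ = r * (s * s) * r := by rw [hrH, hsH]; simp only [mul_assoc]
      _ = r * σ * r := by rw [h2]
      _ = σ * (r * r) := by rw [hrσ, mul_assoc]
      _ = ρ * σ := by rw [h3, ← hρσ]
  -- monomials
  set mA : List (A × X) → Matrix (Fin n) (Fin n) ℂ :=
    fun L => (L.map fun p => MA p.2 p.1).prod with hmA
  set mC : List (C × Z) → Matrix (Fin n) (Fin n) ℂ :=
    fun M => (M.map fun p => MC p.2 p.1).prod with hmC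
  have hfact' : ∀ (L : List (A × X)) (M : List (C × Z)),
      (ρ * σ * (mA L * mC M)).trace = (ρ * σ * mA L).trace * (ρ * σ * mC M).trace := by
    intro L M
    rw [hmA, hmC, ← mul_assoc]
    exact hfact L M
  have hCrev : ∀ (M : List (C × Z)), (mC M)ᴴ = mC M.reverse := by
    intro M
    induction M with
    | nil => simp [hmC]
    | cons h t ih =>
      simp only [hmC] at ih ⊢
      simp [List.prod_cons, Matrix.conjTranspose_mul, ih, List.prod_append, (hCpvm h.2 h.1).1]
  have hACone : ∀ x a (M : List (C × Z)), MA x a * mC M = mC M * MA x a := by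
    intro x a M
    induction M with
    | nil => simp [hmC]
    | cons h t ih =>
      simp only [hmC] at ih ⊢
      rw [List.map_cons, List.prod_cons, ← mul_assoc, hAC x a h.2 h.1, mul_assoc, ih, mul_assoc]
  have hACprod : ∀ (L : List (A × X)) (M : List (C × Z)), mA L * mC M = mC M * mA L := by
    intro L M
    induction L with
    | nil => simp [hmA]
    | cons h t ih =>
      simp only [hmA] at ih ⊢
      rw [List.map_cons, List.prod_cons, mul_assoc, ih, ← mul_assoc, hACone h.2 h.1, mul_assoc]
  -- inner ℂ products against the cyclic vector
  have ginner : ∀ P Q : Matrix (Fin n) (Fin n) ℂ,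
      (inner ℂ (vecE (P * w)) (vecE (Q * w)) : ℂ) = (ρ * σ * (Pᴴ * Q)).trace := by
    intro P Q
    rw [inner_vecE, Matrix.conjTranspose_mul]
    rw [show wᴴ * Pᴴ * (Q * w) = wᴴ * Pᴴ * Q * w from by simp only [mul_assoc]]
    rw [Matrix.trace_mul_comm]
    rw [show w * (wᴴ * Pᴴ * Q) = w * wᴴ * (Pᴴ * Q) from by simp only [mul_assoc]]
    rw [hww]
  have g1 : ∀ P : Matrix (Fin n) (Fin n) ℂ,
      (inner ℂ (vecE (P * w)) (vecE w) : ℂ) = (ρ * σ * Pᴴ).trace := by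
    intro P
    have h := ginner P 1
    simp only [one_mul, mul_one] at h
    exact h
  have g2 : ∀ Q : Matrix (Fin n) (Fin n) ℂ,
      (inner ℂ (vecE w) (vecE (Q * w)) : ℂ) = (ρ * σ * Q).trace := by
    intro Q
    have h := ginner 1 Q
    simp only [one_mul, Matrix.conjTranspose_one] at h
    exact h
  have kfact : ∀ (L : List (A × X)) (M : List (C × Z)),
      (inner ℂ (vecE (mC M * w)) (vecE (mA L * w)) : ℂ) =
        (inner ℂ (vecE (mC M * w)) (vecE w) : ℂ) * (inner ℂ (vecE w) (vecE (mA L * w)) : ℂ) := by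
    intro L M
    rw [ginner, g1, g2, hCrev, ← hACprod, hfact', mul_comm]
  have kfact' : ∀ (L : List (A × X)) (M : List (C × Z)),
      (inner ℂ (vecE (mA L * w)) (vecE (mC M * w)) : ℂ) =
        (inner ℂ (vecE (mA L * w)) (vecE w) : ℂ) * (inner ℂ (vecE w) (vecE (mC M * w)) : ℂ) := by
    intro L M
    have h := congrArg (starRingEnd ℂ) (kfact L M)
    rw [inner_conj_symm, _root_.map_mul, inner_conj_symm, inner_conj_symm] at h
    rw [h, mul_comm]
  -- the GNS subspaces
  set SA : Submodule ℂ (EuclideanSpace ℂ (Fin n × Fin n)) :=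
    Submodule.span ℂ (Set.range fun L : List (A × X) => vecE (mA L * w)) with hSA
  set SC : Submodule ℂ (EuclideanSpace ℂ (Fin n × Fin n)) :=
    Submodule.span ℂ (Set.range fun M : List (C × Z) => vecE (mC M * w)) with hSC
  have hΩSA : vecE w ∈ SA := by
    apply Submodule.subset_span
    exact ⟨[], by simp [hmA]⟩
  have hΩSC : vecE w ∈ SC := by
    apply Submodule.subset_span
    exact ⟨[], by simp [hmC]⟩
  have hinvA : ∀ x a, ∀ u ∈ SA, opL (MA x a) u ∈ SA := by
    intro x a u hu
    induction hu using Submodule.span_induction with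
    | mem v hv =>
      obtain ⟨L, rfl⟩ := hv
      rw [opL_vecE, ← mul_assoc]
      apply Submodule.subset_span
      exact ⟨(a, x) :: L, by simp [hmA, List.prod_cons]⟩
    | zero => rw [_root_.map_zero]; exact SA.zero_mem
    | add u v hu hv pu pv => rw [_root_.map_add]; exact SA.add_mem pu pv
    | smul c u hu pu => rw [_root_.map_smul]; exact SA.smul_mem c pu
  have hinvC : ∀ z c, ∀ u ∈ SC, opL (MC z c) u ∈ SC := by
    intro z c u hu
    induction hu using Submodule.span_induction with
    | mem v hv =>
      obtain ⟨M, rfl⟩ := hv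
      rw [opL_vecE, ← mul_assoc]
      apply Submodule.subset_span
      exact ⟨(c, z) :: M, by simp [hmC, List.prod_cons]⟩
    | zero => rw [_root_.map_zero]; exact SC.zero_mem
    | add u v hu hv pu pv => rw [_root_.map_add]; exact SC.add_mem pu pv
    | smul c' u hu pu => rw [_root_.map_smul]; exact SC.smul_mem c' pu
  -- projections act as the rank-one projector on the other party's subspace
  have hPCact : ∀ u ∈ SA, proj SC u = (inner ℂ (vecE w) u : ℂ) • vecE w := by
    intro u hu
    induction hu using Submodule.span_induction with
    | mem v hv =>
      obtain ⟨L, rfl⟩ := hv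
      apply proj_unique (SC.smul_mem _ hΩSC)
      intro z hz
      induction hz using Submodule.span_induction with
      | mem z' hz' =>
        obtain ⟨M, rfl⟩ := hz'
        rw [inner_sub_right, inner_smul_right, kfact]
        ring
      | zero => simp
      | add z₁ z₂ h₁ h₂ p₁ p₂ => rw [inner_add_left, p₁, p₂, add_zero]
      | smul c z₁ h₁ p₁ => rw [inner_smul_left, p₁, mul_zero]
    | zero => simp
    | add u v hu hv pu pv =>
      rw [_root_.map_add, pu, pv, inner_add_right, add_smul]
    | smul c u hu pu =>
      rw [_root_.map_smul, pu, inner_smul_right, smul_smul]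
  have hPAact : ∀ u ∈ SC, proj SA u = (inner ℂ (vecE w) u : ℂ) • vecE w := by
    intro u hu
    induction hu using Submodule.span_induction with
    | mem v hv =>
      obtain ⟨M, rfl⟩ := hv
      apply proj_unique (SA.smul_mem _ hΩSA)
      intro z hz
      induction hz using Submodule.span_induction with
      | mem z' hz' =>
        obtain ⟨L, rfl⟩ := hz'
        rw [inner_sub_right, inner_smul_right, kfact']
        ring
      | zero => simp
      | add z₁ z₂ h₁ h₂ p₁ p₂ => rw [inner_add_left, p₁, p₂, add_zero]
      | smul c z₁ h₁ p₁ => rw [inner_smul_left, p₁, mul_zero]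
    | zero => simp
    | add u v hu hv pu pv =>
      rw [_root_.map_add, pu, pv, inner_add_right, add_smul]
    | smul c u hu pu =>
      rw [_root_.map_smul, pu, inner_smul_right, smul_smul]
  have hPCPA : proj SC ∘ₗ proj SA = rk1 (vecE w) := by
    ext x : 1
    rw [LinearMap.comp_apply, hPCact _ (proj_mem x), rk1_apply]
    rw [← proj_symm, proj_eq_self hΩSA]
  have hPAPC : proj SA ∘ₗ proj SC = rk1 (vecE w) := by
    ext x : 1
    rw [LinearMap.comp_apply, hPAact _ (proj_mem x), rk1_apply]
    rw [← proj_symm, proj_eq_self hΩSC]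
  -- assemble the purification
  refine ⟨n * n, Nat.mul_pos hn hn,
    ThetaM n (proj SC), ThetaM n (proj SA),
    (fun x a => ThetaM n (opL (MA x a))),
    (fun y b => ThetaM n (opL (MB y b))),
    (fun z c => ThetaM n (opL (MC z c))),
    ?_, ?_, ?_, ?_, ?_, ?_, ?_, ?_, ?_, ?_, ?_, ?_, ?_, ?_, ?_, ?_, ?_, ?_⟩
  · rw [ThetaM_conjTranspose, adjoint_proj]
  · rw [← ThetaM_mul, proj_idem]
  · rw [ThetaM_conjTranspose, adjoint_proj]
  · rw [← ThetaM_mul, proj_idem]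
  · rw [← ThetaM_mul, ← ThetaM_mul, hPCPA, hPAPC]
  · rw [← ThetaM_mul, hPCPA, ThetaM_trace, ← LinearMap.comp_id (rk1 (vecE w)),
      trace_rk1_comp, LinearMap.id_apply]
    have h0 := ginner 1 1
    simp only [one_mul, Matrix.conjTranspose_one, mul_one] at h0
    rw [h0, htr]
  · intro x a
    constructor
    · rw [ThetaM_conjTranspose, adjoint_opL, (hApvm x a).1]
    · rw [← ThetaM_mul, opL_mul, (hApvm x a).2]
  · intro x
    rw [← ThetaM_sum, ← opL_sum, hAsum x, opL_one, ThetaM_one]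
  · intro y b
    constructor
    · rw [ThetaM_conjTranspose, adjoint_opL, (hBpvm y b).1]
    · rw [← ThetaM_mul, opL_mul, (hBpvm y b).2]
  · intro y
    rw [← ThetaM_sum, ← opL_sum, hBsum y, opL_one, ThetaM_one]
  · intro z c
    constructor
    · rw [ThetaM_conjTranspose, adjoint_opL, (hCpvm z c).1]
    · rw [← ThetaM_mul, opL_mul, (hCpvm z c).2]
  · intro z
    rw [← ThetaM_sum, ← opL_sum, hCsum z, opL_one, ThetaM_one]
  · intro x a y b
    rw [← ThetaM_mul, ← ThetaM_mul, opL_mul, opL_mul, hAB x a y b]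
  · intro x a z c
    rw [← ThetaM_mul, ← ThetaM_mul, opL_mul, opL_mul, hAC x a z c]
  · intro y b z c
    rw [← ThetaM_mul, ← ThetaM_mul, opL_mul, opL_mul, hBC y b z c]
  · intro x a
    rw [← ThetaM_mul, ← ThetaM_mul]
    exact congrArg (ThetaM n)
      (proj_comm (fun u v => by rw [inner_opL, (hApvm x a).1]) (hinvA x a))
  · intro z c
    rw [← ThetaM_mul, ← ThetaM_mul]
    exact congrArg (ThetaM n)
      (proj_comm (fun u v => by rw [inner_opL, (hCpvm z c).1]) (hinvC z c)).symm
  · intro x y z a b c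
    rw [← ThetaM_mul, ← ThetaM_mul, ← ThetaM_mul, ← ThetaM_mul, hPCPA,
      opL_mul, opL_mul, ThetaM_trace, trace_rk1_comp, opL_vecE, g2]
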